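/- Let n, M be positive integers, let rho : R -> R be convex and nonnegative, let Y be a vector in R^n, let lambda > 0, let Phi be an n x M real matrix and Omega an n x n real symmetric matrix such that gamma^T * Omega * gamma > 0 for every nonzero gamma in R^n with Phi^T * gamma = 0. Suppose that the function delta |-> sum_{i=1}^n rho(Y_i - (Phi * delta)_i) has a unique minimizer over R^M. Then the constrained optimization problem of minimizing G(gamma, delta) = (1/n) * sum_{i=1}^n rho(Y_i - (Omega * gamma)_i - (Phi * delta)_i) + lambda * gamma^T * Omega * gamma over all (gamma, delta) in R^n x R^M with Phi^T * gamma = 0 attains its minimum, i.e., there exists a feasible pair (gamma*, delta*) at which G is minimal among all feasible pairs. -/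

import Mathlib

open Matrix

set_option maxHeartbeats 1000000 in
/-- Existence of a minimizer for the finite-dimensional representer form
(problem (6)) of the M-type thin-plate spline optimization problem. -/
theorem representer_problem_attains_minimum
    (n M : ℕ) (hn : 0 < n) (hM : 0 < M)
    (ρ : ℝ → ℝ) (hconv : ConvexOn ℝ Set.univ ρ) (hnonneg : ∀ x, 0 ≤ ρ x)
    (Y : Fin n → ℝ) (lam : ℝ) (hlam : 0 < lam)
    (Φ : Matrix (Fin n) (Fin M) ℝ) (Ω : Matrix (Fin n) (Fin n) ℝ)
    (hΩ : Ω.IsSymm)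
    (hpos : ∀ γ : Fin n → ℝ, γ ≠ 0 → Φ.transpose *ᵥ γ = 0 → 0 < γ ⬝ᵥ (Ω *ᵥ γ))
    (huniq : ∃! δ0 : Fin M → ℝ,
      ∀ δ : Fin M → ℝ,
        ∑ i, ρ (Y i - (Φ *ᵥ δ0) i) ≤ ∑ i, ρ (Y i - (Φ *ᵥ δ) i)) :
    ∃ γs : Fin n → ℝ, ∃ δs : Fin M → ℝ,
      Φ.transpose *ᵥ γs = 0 ∧
      ∀ γ : Fin n → ℝ, ∀ δ : Fin M → ℝ, Φ.transpose *ᵥ γ = 0 →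
        (1 / (n : ℝ)) * ∑ i, ρ (Y i - (Ω *ᵥ γs) i - (Φ *ᵥ δs) i)
            + lam * (γs ⬝ᵥ (Ω *ᵥ γs)) ≤
        (1 / (n : ℝ)) * ∑ i, ρ (Y i - (Ω *ᵥ γ) i - (Φ *ᵥ δ) i)
            + lam * (γ ⬝ᵥ (Ω *ᵥ γ)) := by
  classical
  obtain ⟨δ0, hδ0min, hδ0uniq⟩ := huniq
  -- abbreviations
  set h : (Fin M → ℝ) → ℝ := fun δ => ∑ i, ρ (Y i - (Φ *ᵥ δ) i) with hh_def
  set q : (Fin n → ℝ) → ℝ := fun γ => γ ⬝ᵥ (Ω *ᵥ γ) with hq_def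
  set G : (Fin n → ℝ) × (Fin M → ℝ) → ℝ := fun p =>
    (1 / (n : ℝ)) * ∑ i, ρ (Y i - (Ω *ᵥ p.1) i - (Φ *ᵥ p.2) i) + lam * q p.1 with hG_def
  -- continuity facts
  have hρc : Continuous ρ := hconv.locallyLipschitz.continuous
  have hΩc : Continuous fun γ : Fin n → ℝ => Ω *ᵥ γ := by
    have := (Matrix.mulVecLin Ω).continuous_of_finiteDimensional
    simpa only [Matrix.coe_mulVecLin] using this
  have hΦc : Continuous fun δ : Fin M → ℝ => Φ *ᵥ δ := by
    have := (Matrix.mulVecLin Φ).continuous_of_finiteDimensional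
    simpa only [Matrix.coe_mulVecLin] using this
  have hΦtc : Continuous fun γ : Fin n → ℝ => Φ.transpose *ᵥ γ := by
    have := (Matrix.mulVecLin Φ.transpose).continuous_of_finiteDimensional
    simpa only [Matrix.coe_mulVecLin] using this
  have hhc : Continuous h := by
    apply continuous_finset_sum
    intro i _
    exact hρc.comp (continuous_const.sub ((continuous_apply i).comp hΦc))
  have hqc : Continuous q := by
    have : q = fun γ => ∑ i, γ i * (Ω *ᵥ γ) i := rfl
    rw [this]
    exact continuous_finset_sum _ fun i _ =>
      (continuous_apply i).mul ((continuous_apply i).comp hΩc)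
  have hGc : Continuous G := by
    apply Continuous.add
    · apply continuous_const.mul
      apply continuous_finset_sum
      intro i _
      exact hρc.comp
        ((continuous_const.sub ((continuous_apply i).comp (hΩc.comp continuous_fst))).sub
          ((continuous_apply i).comp (hΦc.comp continuous_snd)))
    · exact continuous_const.mul (hqc.comp continuous_fst)
  -- nonnegativity of sums of ρ
  have hsum_nonneg : ∀ (v : Fin n → ℝ), (0:ℝ) ≤ ∑ i, ρ (v i) := fun v =>
    Finset.sum_nonneg fun i _ => hnonneg _
  -- convexity of h (segment inequality)
  have hkey : ∀ (x y : Fin M → ℝ) (a b : ℝ), 0 ≤ a → 0 ≤ b → a + b = 1 →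
      h (a • x + b • y) ≤ a * h x + b * h y := by
    intro x y a b ha hb hab
    have hcoord : ∀ i, Y i - (Φ *ᵥ (a • x + b • y)) i
        = a * (Y i - (Φ *ᵥ x) i) + b * (Y i - (Φ *ᵥ y) i) := by
      intro i
      rw [Matrix.mulVec_add, Matrix.mulVec_smul, Matrix.mulVec_smul]
      simp only [Pi.add_apply, Pi.smul_apply, smul_eq_mul]
      linear_combination (-(Y i)) * hab
    calc h (a • x + b • y)
        = ∑ i, ρ (a * (Y i - (Φ *ᵥ x) i) + b * (Y i - (Φ *ᵥ y) i)) := by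
          simp only [hh_def]; exact Finset.sum_congr rfl fun i _ => by rw [hcoord i]
      _ ≤ ∑ i, (a * ρ (Y i - (Φ *ᵥ x) i) + b * ρ (Y i - (Φ *ᵥ y) i)) := by
          apply Finset.sum_le_sum
          intro i _
          have := hconv.2 (Set.mem_univ (Y i - (Φ *ᵥ x) i)) (Set.mem_univ (Y i - (Φ *ᵥ y) i))
            ha hb hab
          simpa [smul_eq_mul] using this
      _ = a * h x + b * h y := by
          rw [Finset.sum_add_distrib, ← Finset.mul_sum, ← Finset.mul_sum]
  -- the sphere around δ0 and ε
  haveI : Nontrivial (Fin M → ℝ) := by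
    refine ⟨fun _ => 0, fun _ => 1, fun hcon => ?_⟩
    have := congrFun hcon ⟨0, hM⟩
    norm_num at this
  have sphere_ne : (Metric.sphere δ0 1).Nonempty :=
    NormedSpace.sphere_nonempty.mpr zero_le_one
  obtain ⟨δ1, hδ1mem, hδ1min⟩ :=
    (isCompact_sphere δ0 1).exists_isMinOn sphere_ne hhc.continuousOn
  have hδ1min' := isMinOn_iff.mp hδ1min
  set ε := h δ1 - h δ0 with hε_def
  clear_value ε
  have hε : 0 < ε := by
    have hle : h δ0 ≤ h δ1 := hδ0min δ1
    have hne : h δ1 ≠ h δ0 := by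
      intro he
      have hmin1 : ∀ δ, h δ1 ≤ h δ := fun δ => he ▸ hδ0min δ
      have : δ1 = δ0 := hδ0uniq δ1 hmin1
      rw [Metric.mem_sphere, this] at hδ1mem
      simp at hδ1mem
    have : h δ0 < h δ1 := lt_of_le_of_ne hle (Ne.symm hne)
    rw [hε_def]
    linarith
  -- coercivity of h
  have hcoer : ∀ δ : Fin M → ℝ, 1 < ‖δ - δ0‖ → h δ0 + ε * ‖δ - δ0‖ ≤ h δ := by
    intro δ ht
    set t := ‖δ - δ0‖ with ht_def
    have ht0 : 0 < t := lt_trans one_pos ht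
    have htinv : 0 < t⁻¹ := inv_pos.mpr ht0
    set δ' := (1 - t⁻¹) • δ0 + t⁻¹ • δ with hδ'_def
    have hδ'mem : δ' ∈ Metric.sphere δ0 1 := by
      rw [Metric.mem_sphere, dist_eq_norm]
      have hd : δ' - δ0 = t⁻¹ • (δ - δ0) := by
        simp only [hδ'_def]
        module
      rw [hd, norm_smul, Real.norm_eq_abs, abs_of_pos htinv, ← ht_def,
        inv_mul_cancel₀ ht0.ne']
    have h1 : h δ1 ≤ h δ' := hδ1min' δ' hδ'mem
    have h2 : h δ' ≤ (1 - t⁻¹) * h δ0 + t⁻¹ * h δ := by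
      apply hkey δ0 δ (1 - t⁻¹) t⁻¹ _ htinv.le (by ring)
      have htt : t⁻¹ * t = 1 := inv_mul_cancel₀ ht0.ne'
      nlinarith [htt, htinv.le, ht]
    have h3 : h δ0 + ε ≤ (1 - t⁻¹) * h δ0 + t⁻¹ * h δ := by
      have : h δ0 + ε = h δ1 := by rw [hε_def]; ring
      linarith
    have h5 : ε ≤ t⁻¹ * (h δ - h δ0) := by nlinarith [h3]
    have h6 : t * ε ≤ t * (t⁻¹ * (h δ - h δ0)) := mul_le_mul_of_nonneg_left h5 ht0.le
    have h7 : t * (t⁻¹ * (h δ - h δ0)) = h δ - h δ0 := by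
      field_simp
    linarith [h6, h7]
  -- positive definiteness constant on the kernel
  have hqlb : ∃ c : ℝ, 0 < c ∧ ∀ γ : Fin n → ℝ, Φ.transpose *ᵥ γ = 0 →
      c * ‖γ‖ ^ 2 ≤ q γ := by
    set S := Metric.sphere (0 : Fin n → ℝ) 1 ∩ {γ | Φ.transpose *ᵥ γ = 0} with hS_def
    have hScl : IsClosed {γ : Fin n → ℝ | Φ.transpose *ᵥ γ = 0} := by
      have : {γ : Fin n → ℝ | Φ.transpose *ᵥ γ = 0}
          = (fun γ => Φ.transpose *ᵥ γ) ⁻¹' {0} := rfl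
      rw [this]
      exact isClosed_singleton.preimage hΦtc
    have hScale : ∀ γ : Fin n → ℝ, γ ≠ 0 → Φ.transpose *ᵥ γ = 0 → (‖γ‖⁻¹ • γ) ∈ S := by
      intro γ hγ hker
      have hnγ : 0 < ‖γ‖ := norm_pos_iff.mpr hγ
      constructor
      · rw [Metric.mem_sphere, dist_zero_right, norm_smul, Real.norm_eq_abs,
          abs_of_pos (inv_pos.mpr hnγ), inv_mul_cancel₀ hnγ.ne']
      · show Φ.transpose *ᵥ (‖γ‖⁻¹ • γ) = 0
        rw [Matrix.mulVec_smul, hker, smul_zero]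
    by_cases hS : S.Nonempty
    · have hScomp : IsCompact S := (isCompact_sphere 0 1).inter_right hScl
      obtain ⟨γu, hγumem, hγumin⟩ := hScomp.exists_isMinOn hS hqc.continuousOn
      have hγumin' := isMinOn_iff.mp hγumin
      have hγu_ne : γu ≠ 0 := by
        intro hcon
        have := hγumem.1
        rw [hcon, Metric.mem_sphere, dist_self] at this
        norm_num at this
      have hc : 0 < q γu := hpos γu hγu_ne hγumem.2
      refine ⟨q γu, hc, fun γ hker => ?_⟩
      by_cases hγ : γ = 0
      · simp [hγ, hq_def]
      · have hnγ : 0 < ‖γ‖ := norm_pos_iff.mpr hγ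
        have hu : q γu ≤ q (‖γ‖⁻¹ • γ) := hγumin' _ (hScale γ hγ hker)
        have hqs : q γ = ‖γ‖ ^ 2 * q (‖γ‖⁻¹ • γ) := by
          have hγeq : γ = ‖γ‖ • (‖γ‖⁻¹ • γ) := by
            rw [smul_smul, mul_inv_cancel₀ hnγ.ne', one_smul]
          conv_lhs => rw [hγeq]
          simp only [hq_def]
          rw [Matrix.mulVec_smul, smul_dotProduct, dotProduct_smul]
          simp only [smul_eq_mul]; ring
        rw [hqs]
        nlinarith [sq_nonneg ‖γ‖, hu, hc]
    · refine ⟨1, one_pos, fun γ hker => ?_⟩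
      have hγ : γ = 0 := by
        by_contra hγ
        exact hS ⟨_, hScale γ hγ hker⟩
      simp [hγ, hq_def]
  obtain ⟨c, hc, hclb⟩ := hqlb
  have hq_nonneg : ∀ γ : Fin n → ℝ, Φ.transpose *ᵥ γ = 0 → 0 ≤ q γ := by
    intro γ hker
    have := hclb γ hker
    nlinarith [norm_nonneg γ, sq_nonneg ‖γ‖]
  -- level m0 and radius for γ
  set m0 := G (0, δ0) with hm0_def
  clear_value m0
  have hninv : 0 < (1 / (n:ℝ)) := by positivity
  set Rγ := Real.sqrt (m0 / (lam * c)) with hRγ_def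
  clear_value Rγ
  have hRγ0 : 0 ≤ Rγ := hRγ_def ▸ Real.sqrt_nonneg _
  have hγ_bound : ∀ γ : Fin n → ℝ, ∀ δ : Fin M → ℝ, Φ.transpose *ᵥ γ = 0 →
      G (γ, δ) ≤ m0 → ‖γ‖ ≤ Rγ := by
    intro γ δ hker hlev
    have hlev' : (1 / (n:ℝ)) * ∑ i, ρ (Y i - (Ω *ᵥ γ) i - (Φ *ᵥ δ) i) + lam * q γ ≤ m0 := by
      have := hlev
      simp only [hG_def] at this
      exact this
    have h1 : lam * q γ ≤ m0 := by
      have h2 : (0:ℝ) ≤ (1 / (n:ℝ)) * ∑ i, ρ (Y i - (Ω *ᵥ γ) i - (Φ *ᵥ δ) i) :=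
        mul_nonneg hninv.le (hsum_nonneg _)
      linarith
    have h3 : c * ‖γ‖ ^ 2 ≤ m0 / lam := by
      have := hclb γ hker
      have hq2 : q γ ≤ m0 / lam := by
        rw [le_div_iff₀ hlam]; linarith [h1]
      linarith
    have h4 : ‖γ‖ ^ 2 ≤ m0 / (lam * c) := by
      rw [le_div_iff₀ (by positivity)]
      calc ‖γ‖ ^ 2 * (lam * c) = lam * (c * ‖γ‖ ^ 2) := by ring
        _ ≤ lam * (m0 / lam) := mul_le_mul_of_nonneg_left h3 hlam.le
        _ = m0 := by field_simp
    rw [hRγ_def]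
    exact Real.le_sqrt_of_sq_le h4
  -- uniform bound C for the auxiliary term on the ball of radius Rγ
  have hfCc : Continuous fun γ : Fin n → ℝ => ∑ i, ρ (Y i + (Ω *ᵥ γ) i) := by
    apply continuous_finset_sum
    intro i _
    exact hρc.comp (continuous_const.add ((continuous_apply i).comp hΩc))
  obtain ⟨γm, hγmmem, hγmmax⟩ := (isCompact_closedBall (0 : Fin n → ℝ) Rγ).exists_isMaxOn
    ⟨0, Metric.mem_closedBall_self hRγ0⟩ hfCc.continuousOn
  have hγmmax' := isMaxOn_iff.mp hγmmax
  set C := ∑ i, ρ (Y i + (Ω *ᵥ γm) i) with hC_def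
  clear_value C
  -- bound on δ on the sublevel set
  set B2 := max 1 (((↑n * m0 + C) / 2 - h δ0) / ε) with hB2_def
  clear_value B2
  have hB2_1 : (1:ℝ) ≤ B2 := hB2_def ▸ le_max_left _ _
  set Rδ := 2 * (B2 + ‖δ0‖) with hRδ_def
  clear_value Rδ
  have hδ_bound : ∀ γ : Fin n → ℝ, ∀ δ : Fin M → ℝ, Φ.transpose *ᵥ γ = 0 →
      G (γ, δ) ≤ m0 → ‖δ‖ ≤ Rδ := by
    intro γ δ hker hlev
    have hγR : ‖γ‖ ≤ Rγ := hγ_bound γ δ hker hlev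
    have hlev' : (1 / (n:ℝ)) * ∑ i, ρ (Y i - (Ω *ᵥ γ) i - (Φ *ᵥ δ) i) + lam * q γ ≤ m0 := by
      have := hlev
      simp only [hG_def] at this
      exact this
    -- the ρ-sum is at most n * m0
    have hρsum : ∑ i, ρ (Y i - (Ω *ᵥ γ) i - (Φ *ᵥ δ) i) ≤ ↑n * m0 := by
      have h1 : (1 / (n:ℝ)) * ∑ i, ρ (Y i - (Ω *ᵥ γ) i - (Φ *ᵥ δ) i) ≤ m0 := by
        have h2 : 0 ≤ lam * q γ := mul_nonneg hlam.le (hq_nonneg γ hker)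
        linarith
      have hn' : (0:ℝ) < (n:ℝ) := by exact_mod_cast hn
      calc ∑ i, ρ (Y i - (Ω *ᵥ γ) i - (Φ *ᵥ δ) i)
          = (n:ℝ) * ((1 / (n:ℝ)) * ∑ i, ρ (Y i - (Ω *ᵥ γ) i - (Φ *ᵥ δ) i)) := by
            field_simp
        _ ≤ (n:ℝ) * m0 := mul_le_mul_of_nonneg_left h1 hn'.le
    -- midpoint inequality : h (2⁻¹ • δ) ≤ (sum + C)/2
    have hmid : h ((2:ℝ)⁻¹ • δ) ≤ ((↑n * m0) + C) / 2 := by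
      have hCγ : ∑ i, ρ (Y i + (Ω *ᵥ γ) i) ≤ C := by
        have hmem : γ ∈ Metric.closedBall (0 : Fin n → ℝ) Rγ := by
          rw [Metric.mem_closedBall, dist_zero_right]; exact hγR
        exact hγmmax' γ hmem
      have hterm : ∀ i, ρ (Y i - (Φ *ᵥ ((2:ℝ)⁻¹ • δ)) i)
          ≤ (2:ℝ)⁻¹ * ρ (Y i - (Ω *ᵥ γ) i - (Φ *ᵥ δ) i) + (2:ℝ)⁻¹ * ρ (Y i + (Ω *ᵥ γ) i) := by
        intro i
        have hmideq : Y i - (Φ *ᵥ ((2:ℝ)⁻¹ • δ)) i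
            = (2:ℝ)⁻¹ * (Y i - (Ω *ᵥ γ) i - (Φ *ᵥ δ) i) + (2:ℝ)⁻¹ * (Y i + (Ω *ᵥ γ) i) := by
          rw [Matrix.mulVec_smul]
          simp only [Pi.smul_apply, smul_eq_mul]
          ring
        rw [hmideq]
        have := hconv.2 (Set.mem_univ (Y i - (Ω *ᵥ γ) i - (Φ *ᵥ δ) i))
          (Set.mem_univ (Y i + (Ω *ᵥ γ) i)) (by norm_num : (0:ℝ) ≤ 2⁻¹)
          (by norm_num : (0:ℝ) ≤ 2⁻¹) (by norm_num)
        simpa [smul_eq_mul] using this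
      calc h ((2:ℝ)⁻¹ • δ)
          ≤ ∑ i, ((2:ℝ)⁻¹ * ρ (Y i - (Ω *ᵥ γ) i - (Φ *ᵥ δ) i)
              + (2:ℝ)⁻¹ * ρ (Y i + (Ω *ᵥ γ) i)) :=
            Finset.sum_le_sum fun i _ => hterm i
        _ = (2:ℝ)⁻¹ * (∑ i, ρ (Y i - (Ω *ᵥ γ) i - (Φ *ᵥ δ) i))
              + (2:ℝ)⁻¹ * (∑ i, ρ (Y i + (Ω *ᵥ γ) i)) := by
            rw [Finset.sum_add_distrib, ← Finset.mul_sum, ← Finset.mul_sum]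
        _ ≤ (2:ℝ)⁻¹ * (↑n * m0) + (2:ℝ)⁻¹ * C := by
            have hCγ' := hCγ
            linarith [hρsum, hCγ']
        _ = ((↑n * m0) + C) / 2 := by ring
    -- use coercivity to bound ‖2⁻¹ • δ - δ0‖
    have hhalf : ‖(2:ℝ)⁻¹ • δ - δ0‖ ≤ B2 := by
      by_cases hbig : 1 < ‖(2:ℝ)⁻¹ • δ - δ0‖
      · have hco := hcoer _ hbig
        have h2 : h δ0 + ε * ‖(2:ℝ)⁻¹ • δ - δ0‖ ≤ ((↑n * m0) + C) / 2 := le_trans hco hmid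
        have h3 : ‖(2:ℝ)⁻¹ • δ - δ0‖ ≤ ((↑n * m0 + C) / 2 - h δ0) / ε := by
          rw [le_div_iff₀ hε]
          nlinarith
        rw [hB2_def]
        exact le_trans h3 (le_max_right _ _)
      · push_neg at hbig
        exact le_trans hbig hB2_1
    have htri : ‖(2:ℝ)⁻¹ • δ‖ ≤ B2 + ‖δ0‖ := by
      calc ‖(2:ℝ)⁻¹ • δ‖ = ‖((2:ℝ)⁻¹ • δ - δ0) + δ0‖ := by congr 1; abel
        _ ≤ ‖(2:ℝ)⁻¹ • δ - δ0‖ + ‖δ0‖ := norm_add_le _ _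
        _ ≤ B2 + ‖δ0‖ := by linarith
    have hnδ : ‖δ‖ = 2 * ‖(2:ℝ)⁻¹ • δ‖ := by
      rw [norm_smul, Real.norm_eq_abs, abs_of_pos (by norm_num : (0:ℝ) < 2⁻¹)]
      ring
    rw [hnδ, hRδ_def]
    linarith
  -- compact feasible region
  set Cpt := (Metric.closedBall (0 : Fin n → ℝ) Rγ ∩ {γ | Φ.transpose *ᵥ γ = 0}) ×ˢ
      Metric.closedBall (0 : Fin M → ℝ) Rδ with hCpt_def
  clear_value Cpt
  have hScl : IsClosed {γ : Fin n → ℝ | Φ.transpose *ᵥ γ = 0} := by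
    have : {γ : Fin n → ℝ | Φ.transpose *ᵥ γ = 0}
        = (fun γ => Φ.transpose *ᵥ γ) ⁻¹' {0} := rfl
    rw [this]
    exact isClosed_singleton.preimage hΦtc
  have hCptc : IsCompact Cpt := by
    rw [hCpt_def]
    exact ((isCompact_closedBall 0 Rγ).inter_right hScl).prod (isCompact_closedBall 0 Rδ)
  have hδ0Rδ : ‖δ0‖ ≤ Rδ := by
    rw [hRδ_def]
    nlinarith [norm_nonneg δ0, hB2_1]
  have hmem0 : ((0 : Fin n → ℝ), δ0) ∈ Cpt := by
    rw [hCpt_def]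
    refine Set.mem_prod.mpr ⟨Set.mem_inter (Metric.mem_closedBall_self hRγ0) ?_, ?_⟩
    · show Φ.transpose *ᵥ (0 : Fin n → ℝ) = 0
      simp
    · rw [Metric.mem_closedBall, dist_zero_right]; exact hδ0Rδ
  obtain ⟨ps, hpsmem, hpsmin⟩ := hCptc.exists_isMinOn ⟨_, hmem0⟩ hGc.continuousOn
  have hpsmin' := isMinOn_iff.mp hpsmin
  have hpsfeas : Φ.transpose *ᵥ ps.1 = 0 := by
    rw [hCpt_def] at hpsmem
    exact (Set.mem_prod.mp hpsmem).1.2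
  refine ⟨ps.1, ps.2, hpsfeas, ?_⟩
  intro γ δ hker
  have hgoal : G (ps.1, ps.2) ≤ G (γ, δ) := by
    have heta : (ps.1, ps.2) = ps := rfl
    rw [heta]
    by_cases hlev : G (γ, δ) ≤ m0
    · apply hpsmin' (γ, δ)
      rw [hCpt_def]
      refine Set.mem_prod.mpr ⟨Set.mem_inter ?_ hker, ?_⟩
      · rw [Metric.mem_closedBall, dist_zero_right]
        exact hγ_bound γ δ hker hlev
      · rw [Metric.mem_closedBall, dist_zero_right]
        exact hδ_bound γ δ hker hlev
    · push_neg at hlev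
      have h1 : G ps ≤ G (0, δ0) := hpsmin' _ hmem0
      rw [← hm0_def] at h1
      linarith
  exact hgoal
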